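/- Let v ∈ V_l and let λ be a FLOTW l-partition of multicharge v. Let γ_A = (a′, b+1, c′) be an addable i-node of λ and γ_R = (a, b, c) a removable i-node of λ (same residue i, with the column of γ_A exceeding that of γ_R by one). Then γ_R ≺_v γ_A. -/

import Mathlib

/-- An `l`-multipartition: `part c a` is the `(a+1)`-st part (0-based row index `a`)
of the partition `λ^{(c)}`. Parts are weakly decreasing and eventually zero. -/
structure MultiPartition (l : ℕ) where
  part : Fin l → ℕ → ℕ
  antitone : ∀ c : Fin l, ∀ a b : ℕ, a ≤ b → part c b ≤ part c a
  finite : ∃ N : ℕ, ∀ c : Fin l, ∀ a : ℕ, N ≤ a → part c a = 0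

namespace MultiPartition

variable {l : ℕ}

/-- A node is a triple `(a, b, c)`: row `a`, column `b` (both 0-based), component `c`.
The node `(a, b, c)` belongs to `lam` iff `b < lam.part c a`. -/
def content (v : Fin l → ℤ) (γ : ℕ × ℕ × Fin l) : ℤ :=
  (γ.2.1 : ℤ) - (γ.1 : ℤ) + v γ.2.2

def res (e : ℕ) (v : Fin l → ℤ) (γ : ℕ × ℕ × Fin l) : ZMod e :=
  ((content v γ : ℤ) : ZMod e)

/-- The total order `≺_v` on `i`-nodes. -/
def prec (v : Fin l → ℤ) (γ δ : ℕ × ℕ × Fin l) : Prop :=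
  content v γ < content v δ ∨ (content v γ = content v δ ∧ δ.2.2 < γ.2.2)

/-- `γ = (a,b,c)` is a removable node of `lam`: it is the last node of its row
(`lam.part c a = b + 1`) and removing it leaves a multipartition. -/
def Removable (lam : MultiPartition l) (γ : ℕ × ℕ × Fin l) : Prop :=
  lam.part γ.2.2 γ.1 = γ.2.1 + 1 ∧ lam.part γ.2.2 (γ.1 + 1) ≤ γ.2.1

/-- `γ = (a,b,c)` is an addable node of `lam`: it sits just beyond its row
(`lam.part c a = b`) and adding it yields a multipartition. -/
def Addable (lam : MultiPartition l) (γ : ℕ × ℕ × Fin l) : Prop :=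
  lam.part γ.2.2 γ.1 = γ.2.1 ∧ (γ.1 = 0 ∨ γ.2.1 < lam.part γ.2.2 (γ.1 - 1))

/-- The set `V_l` of multicharges: `v_0 ≤ v_1 ≤ ⋯ ≤ v_{l-1} < v_0 + e`. -/
def memV (e : ℕ) [NeZero l] (v : Fin l → ℤ) : Prop :=
  Monotone v ∧ ∀ c : Fin l, v c < v 0 + e

/-- FLOTW condition for an `l`-partition with multicharge `v ∈ V_l`. -/
def IsFLOTW (e : ℕ) [NeZero l] (v : Fin l → ℤ) (lam : MultiPartition l) : Prop :=
  (∀ c : Fin l, ∀ h : (c : ℕ) + 1 < l, ∀ a : ℕ,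
      lam.part ⟨(c : ℕ) + 1, h⟩ (a + (v ⟨(c : ℕ) + 1, h⟩ - v c).toNat) ≤ lam.part c a)
  ∧ (∀ a : ℕ,
      lam.part 0 (a + ((e : ℤ) + v 0 -
          v ⟨l - 1, Nat.sub_lt (Nat.pos_of_ne_zero (NeZero.ne l)) Nat.one_pos⟩).toNat)
        ≤ lam.part ⟨l - 1, Nat.sub_lt (Nat.pos_of_ne_zero (NeZero.ne l)) Nat.one_pos⟩ a)
  ∧ ∀ k : ℕ, 1 ≤ k → ∃ i : ZMod e, ∀ c : Fin l, ∀ a : ℕ,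
      lam.part c a = k → (((k : ℤ) - ((a : ℤ) + 1) + v c : ℤ) : ZMod e) ≠ i


lemma chain_up (e : ℕ) [NeZero l] (v : Fin l → ℤ) (hv : memV e v)
    (lam : MultiPartition l)
    (h1 : ∀ c : Fin l, ∀ h : (c : ℕ) + 1 < l, ∀ a : ℕ,
      lam.part ⟨(c : ℕ) + 1, h⟩ (a + (v ⟨(c : ℕ) + 1, h⟩ - v c).toNat) ≤ lam.part c a) :
    ∀ (d : ℕ) (c : Fin l) (h : (c : ℕ) + d < l) (a : ℕ),
      lam.part ⟨(c : ℕ) + d, h⟩ (a + (v ⟨(c : ℕ) + d, h⟩ - v c).toNat) ≤ lam.part c a := by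
  intro d
  induction d with
  | zero =>
    intro c h a
    simp
  | succ d ih =>
    intro c h a
    have hd : (c : ℕ) + d < l := by omega
    set cm : Fin l := ⟨(c : ℕ) + d, hd⟩ with hcm
    have h' : (cm : ℕ) + 1 < l := by simp only [hcm]; omega
    have key := h1 cm h' (a + (v cm - v c).toNat)
    have hle1 : c ≤ cm := by simp [Fin.le_def, hcm]
    have hle2 : cm ≤ (⟨(cm:ℕ)+1, h'⟩ : Fin l) := by simp [Fin.le_def]
    have m1 : v c ≤ v cm := hv.1 hle1
    have m2 : v cm ≤ v ⟨(cm:ℕ)+1, h'⟩ := hv.1 hle2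
    have e1 : ((v cm - v c).toNat : ℤ) = v cm - v c := Int.toNat_of_nonneg (by omega)
    have e2 : ((v ⟨(cm:ℕ)+1, h'⟩ - v cm).toNat : ℤ) = v ⟨(cm:ℕ)+1, h'⟩ - v cm :=
      Int.toNat_of_nonneg (by omega)
    have e3 : ((v ⟨(cm:ℕ)+1, h'⟩ - v c).toNat : ℤ) = v ⟨(cm:ℕ)+1, h'⟩ - v c :=
      Int.toNat_of_nonneg (by omega)
    have hnat : a + (v ⟨(cm:ℕ)+1, h'⟩ - v c).toNat
        = a + (v cm - v c).toNat + (v ⟨(cm:ℕ)+1, h'⟩ - v cm).toNat := by omega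
    have hfin : (⟨(c:ℕ)+(d+1), h⟩ : Fin l) = ⟨(cm:ℕ)+1, h'⟩ := by
      apply Fin.ext; simp [hcm]; omega
    rw [hfin, hnat]
    exact le_trans key (ih c hd a)

lemma chain_up' (e : ℕ) [NeZero l] (v : Fin l → ℤ) (hv : memV e v)
    (lam : MultiPartition l)
    (h1 : ∀ c : Fin l, ∀ h : (c : ℕ) + 1 < l, ∀ a : ℕ,
      lam.part ⟨(c : ℕ) + 1, h⟩ (a + (v ⟨(c : ℕ) + 1, h⟩ - v c).toNat) ≤ lam.part c a)
    (c c' : Fin l) (hcc : c ≤ c') (a : ℕ) :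
    lam.part c' (a + (v c' - v c).toNat) ≤ lam.part c a := by
  have hd : (c : ℕ) + (c' - c : ℕ) < l := by
    have := c'.isLt; have := Fin.le_def.mp hcc; omega
  have hfe : (⟨(c:ℕ) + ((c':ℕ) - (c:ℕ)), hd⟩ : Fin l) = c' := by
    apply Fin.ext; simp; have := Fin.le_def.mp hcc; omega
  have := chain_up e v hv lam h1 ((c':ℕ) - (c:ℕ)) c hd a
  rwa [hfe] at this

lemma chain_wrap (e : ℕ) [NeZero l] (v : Fin l → ℤ) (hv : memV e v)
    (lam : MultiPartition l)
    (h1 : ∀ c : Fin l, ∀ h : (c : ℕ) + 1 < l, ∀ a : ℕ,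
      lam.part ⟨(c : ℕ) + 1, h⟩ (a + (v ⟨(c : ℕ) + 1, h⟩ - v c).toNat) ≤ lam.part c a)
    (h2 : ∀ a : ℕ,
      lam.part 0 (a + ((e : ℤ) + v 0 -
          v ⟨l - 1, Nat.sub_lt (Nat.pos_of_ne_zero (NeZero.ne l)) Nat.one_pos⟩).toNat)
        ≤ lam.part ⟨l - 1, Nat.sub_lt (Nat.pos_of_ne_zero (NeZero.ne l)) Nat.one_pos⟩ a)
    (c c' : Fin l) (a : ℕ) :
    lam.part c' (a + ((e : ℤ) + v c' - v c).toNat) ≤ lam.part c a := by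
  set last : Fin l := ⟨l - 1, Nat.sub_lt (Nat.pos_of_ne_zero (NeZero.ne l)) Nat.one_pos⟩
    with hlast
  have hclast : c ≤ last := by
    simp [Fin.le_def, hlast]; have := c.isLt; omega
  have h0c' : (0 : Fin l) ≤ c' := by
    simp [Fin.le_def]
  have m1 : v c ≤ v last := hv.1 hclast
  have m2 : v 0 ≤ v c' := hv.1 h0c'
  have m3 : v last < v 0 + e := hv.2 last
  have s1 := chain_up' e v hv lam h1 c last hclast a
  have s2 := h2 (a + (v last - v c).toNat)
  have s3 := chain_up' e v hv lam h1 0 c' h0c'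
      (a + (v last - v c).toNat + ((e : ℤ) + v 0 - v last).toNat)
  have e1 : ((v last - v c).toNat : ℤ) = v last - v c := Int.toNat_of_nonneg (by omega)
  have e2 : (((e : ℤ) + v 0 - v last).toNat : ℤ) = (e : ℤ) + v 0 - v last :=
    Int.toNat_of_nonneg (by omega)
  have e3 : ((v c' - v 0).toNat : ℤ) = v c' - v 0 := Int.toNat_of_nonneg (by omega)
  have e4 : (((e : ℤ) + v c' - v c).toNat : ℤ) = (e : ℤ) + v c' - v c :=
    Int.toNat_of_nonneg (by omega)
  have hnat : a + ((e : ℤ) + v c' - v c).toNat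
      = a + (v last - v c).toNat + ((e : ℤ) + v 0 - v last).toNat + (v c' - v 0).toNat := by
    omega
  rw [hnat]
  exact le_trans s3 (le_trans s2 s1)


end MultiPartition

open MultiPartition in
/-- for a FLOTW `l`-partition, an addable `i`-node whose column exceeds
by one the column of a removable `i`-node is larger in `≺_v`. -/
theorem flotw_rem_prec_add (e l : ℕ) [NeZero l] (he : 2 ≤ e)
    (v : Fin l → ℤ) (hv : memV e v)
    (lam : MultiPartition l) (hlam : IsFLOTW e v lam) (i : ZMod e)
    (γA γR : ℕ × ℕ × Fin l)
    (hA : Addable lam γA) (hresA : res e v γA = i)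
    (hR : Removable lam γR) (hresR : res e v γR = i)
    (hcol : γA.2.1 = γR.2.1 + 1) :
    prec v γR γA := by
  obtain ⟨ha1, ha2, _⟩ := hlam
  obtain ⟨a, b, c⟩ := γR
  obtain ⟨a', b', c'⟩ := γA
  simp only at hcol
  subst hcol
  simp only [Removable, Addable, content, res, prec] at *
  by_contra hcon
  push_neg at hcon
  obtain ⟨hle, heqc⟩ := hcon
  -- divisibility of content difference by e
  have hmod := hresA.trans hresR.symm
  have hdvd : (e : ℤ) ∣ ((b:ℤ) - a + v c) - (((b+1:ℕ):ℤ) - a' + v c') :=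
    ((ZMod.intCast_eq_intCast_iff _ _ _).mp hmod).dvd
  set D : ℤ := ((b:ℤ) - a + v c) - (((b+1:ℕ):ℤ) - a' + v c') with hDdef
  have hD0 : 0 ≤ D := by omega
  rcases eq_or_ne D 0 with hD | hD
  · -- equal contents: then c ≤ c'
    have hcc : c ≤ c' := heqc (by omega)
    have m1 : v c ≤ v c' := hv.1 hcc
    have ht : ((v c' - v c).toNat : ℤ) = v c' - v c := Int.toNat_of_nonneg (by omega)
    have chainup := chain_up' e v hv lam ha1 c c' hcc a
    have hne : a' ≠ 0 := by omega
    have hrow : a + (v c' - v c).toNat = a' - 1 := by omega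
    have hadd := hA.2.resolve_left hne
    rw [hrow] at chainup
    omega
  · -- content of γA strictly smaller: D ≥ e
    have hDe : (e : ℤ) ≤ D := Int.le_of_dvd (lt_of_le_of_ne hD0 (Ne.symm hD)) hdvd
    have m2 : v 0 ≤ v c' := hv.1 (by simp [Fin.le_def])
    have m3 : v c < v 0 + e := hv.2 c
    have hs : (((e:ℤ) + v c' - v c).toNat : ℤ) = (e:ℤ) + v c' - v c :=
      Int.toNat_of_nonneg (by omega)
    have wrap := chain_wrap e v hv lam ha1 ha2 c c' a
    have hne : a' ≠ 0 := by omega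
    have hrow : a + ((e:ℤ) + v c' - v c).toNat ≤ a' - 1 := by omega
    have mono := lam.antitone c' _ _ hrow
    have hadd := hA.2.resolve_left hne
    omega
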